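/- Under the orthogonal sparsity model, for any deterministic λₙ the upward bias satisfies E[σ̃²ₙ] − σ² ≤ (n^α/n)·r_S(λₙ, β) + ((n − n^α)/n)·r_S(λₙ, 0), where σ̃²ₙ = (1/n)·Σᵢ min{Yᵢ², λₙ²}. -/

import Mathlib

open MeasureTheory ProbabilityTheory Filter Finset

/-- The orthogonal sparsity model: for sample size `n`, the joint law on `Fin n → ℝ`
of independent Gaussians `Yᵢ ~ N(βᵢ, σ²)`, where `βᵢ = β` for the first `⌈n^α⌉`
indices and `βᵢ = 0` otherwise. -/
noncomputable def orthoModel (β σ α : ℝ) (n : ℕ) : Measure (Fin n → ℝ) :=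
  Measure.pi fun i =>
    gaussianReal (if (i : ℕ) < ⌈(n : ℝ)^α⌉₊ then β else 0) ⟨σ^2, sq_nonneg σ⟩


/-- Soft thresholding operator. -/
noncomputable def softThresh (y lam : ℝ) : ℝ := Real.sign y * max (|y| - lam) 0

/-- Risk of soft thresholding at a Gaussian mean `b` with noise level `σ`. -/
noncomputable def softRisk (σ lam b : ℝ) : ℝ :=
  ∫ y, (softThresh y lam - b)^2 ∂(gaussianReal b ⟨σ^2, sq_nonneg σ⟩)

section Aux
open Real



lemma softThresh_eq {lam : ℝ} (hlam : 0 ≤ lam) (y : ℝ) :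
    softThresh y lam = max (y - lam) 0 + min (y + lam) 0 := by
  unfold softThresh
  rcases lt_trichotomy y 0 with hy | hy | hy
  · rw [Real.sign_of_neg hy, abs_of_neg hy]
    rcases le_or_gt (y + lam) 0 with h | h
    · rw [max_eq_left (by linarith), max_eq_right (by linarith), min_eq_left h]; ring
    · rw [max_eq_right (by linarith), max_eq_right (by linarith), min_eq_right h.le]; ring
  · subst hy; simp [Real.sign_zero, max_eq_right (by linarith : -(0:ℝ) - lam ≤ 0),
      min_eq_right (by linarith : (0:ℝ) ≤ 0 + lam)]
    rw [max_eq_right (by linarith), min_eq_right (by linarith)]; ring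
  · rw [Real.sign_of_pos hy, abs_of_pos hy, min_eq_right (by linarith)]; ring

lemma softThresh_monotone {lam : ℝ} (hlam : 0 ≤ lam) :
    Monotone (fun y => softThresh y lam) := by
  have : (fun y => softThresh y lam)
      = fun y => max (y - lam) 0 + min (y + lam) 0 := funext (softThresh_eq hlam)
  rw [this]
  exact fun a b hab => add_le_add (max_le_max (by linarith) le_rfl)
    (min_le_min (by linarith) le_rfl)

lemma abs_softThresh_le {lam : ℝ} (hlam : 0 ≤ lam) (y : ℝ) : |softThresh y lam| ≤ |y| := by
  rw [softThresh_eq hlam y]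
  rcases le_or_gt y 0 with hy | hy
  · rw [max_eq_right (by linarith), zero_add, abs_of_nonpos (min_le_right _ _),
      abs_of_nonpos hy]
    rcases le_or_gt (y + lam) 0 with h | h
    · rw [min_eq_left h]; linarith
    · rw [min_eq_right h.le]; linarith
  · rw [min_eq_right (by linarith), add_zero, abs_of_nonneg (le_max_right _ _),
      abs_of_pos hy]
    rcases le_or_gt (y - lam) 0 with h | h
    · rw [max_eq_right h]; linarith
    · rw [max_eq_left h.le]; linarith

lemma min_sq_eq_sub_softThresh {lam : ℝ} (hlam : 0 ≤ lam) (y : ℝ) :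
    min (y^2) (lam^2) = (y - softThresh y lam)^2 := by
  rw [softThresh_eq hlam y]
  rcases le_or_gt (y + lam) 0 with h1 | h1
  · rw [max_eq_right (by linarith), min_eq_left h1, min_eq_right (by nlinarith)]; ring
  · rcases le_or_gt (y - lam) 0 with h2 | h2
    · rw [max_eq_right h2, min_eq_right h1.le, min_eq_left (by nlinarith)]; ring
    · rw [max_eq_left h2.le, min_eq_right h1.le, min_eq_right (by nlinarith)]; ring

lemma softThresh_measurable (lam : ℝ) (hlam : 0 ≤ lam) :
    Measurable (fun y => softThresh y lam) :=
  (softThresh_monotone hlam).measurable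

/-- Chebyshev correlation inequality for two monotone functions. -/
lemma mul_integral_le_integral_mul {μ : Measure ℝ} [IsProbabilityMeasure μ]
    {f g : ℝ → ℝ} (hf : Monotone f) (hg : Monotone g)
    (hfi : Integrable f μ) (hgi : Integrable g μ)
    (hfgi : Integrable (fun x => f x * g x) μ) :
    (∫ x, f x ∂μ) * (∫ x, g x ∂μ) ≤ ∫ x, f x * g x ∂μ := by
  have h1 : Integrable (fun p : ℝ × ℝ => f p.1 * g p.1) (μ.prod μ) := by
    simpa using hfgi.mul_prod (integrable_const (1:ℝ))
  have h2 : Integrable (fun p : ℝ × ℝ => f p.2 * g p.2) (μ.prod μ) := by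
    simpa using (integrable_const (1:ℝ)).mul_prod hfgi
  have h3 : Integrable (fun p : ℝ × ℝ => f p.1 * g p.2) (μ.prod μ) := hfi.mul_prod hgi
  have h4 : Integrable (fun p : ℝ × ℝ => f p.2 * g p.1) (μ.prod μ) := by
    have := hgi.mul_prod hfi
    simpa [mul_comm] using this
  have key : 0 ≤ ∫ p : ℝ × ℝ, (f p.1 - f p.2) * (g p.1 - g p.2) ∂(μ.prod μ) := by
    refine integral_nonneg fun p => ?_
    show (0:ℝ) ≤ (f p.1 - f p.2) * (g p.1 - g p.2)
    rcases le_total p.1 p.2 with h | h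
    · nlinarith [hf h, hg h]
    · nlinarith [hf h, hg h]
  have expand : ∫ p : ℝ × ℝ, (f p.1 - f p.2) * (g p.1 - g p.2) ∂(μ.prod μ)
      = (∫ p : ℝ × ℝ, f p.1 * g p.1 ∂(μ.prod μ))
        + (∫ p : ℝ × ℝ, f p.2 * g p.2 ∂(μ.prod μ))
        - (∫ p : ℝ × ℝ, f p.1 * g p.2 ∂(μ.prod μ))
        - (∫ p : ℝ × ℝ, f p.2 * g p.1 ∂(μ.prod μ)) := by
    have hfun : (fun p : ℝ × ℝ => (f p.1 - f p.2) * (g p.1 - g p.2))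
        = fun p : ℝ × ℝ => (f p.1 * g p.1 + f p.2 * g p.2 - f p.1 * g p.2) - f p.2 * g p.1 := by
      funext p; ring
    have h12 : Integrable (fun p : ℝ × ℝ => f p.1 * g p.1 + f p.2 * g p.2) (μ.prod μ) :=
      h1.add h2
    have h123 : Integrable
        (fun p : ℝ × ℝ => f p.1 * g p.1 + f p.2 * g p.2 - f p.1 * g p.2) (μ.prod μ) :=
      h12.sub h3
    rw [hfun, integral_sub h123 h4, integral_sub h12 h3, integral_add h1 h2]
  have e1 : ∫ p : ℝ × ℝ, f p.1 * g p.1 ∂(μ.prod μ) = ∫ x, f x * g x ∂μ := by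
    have := integral_prod_mul (μ := μ) (ν := μ) (fun x => f x * g x) (fun _ => (1:ℝ))
    simpa using this
  have e2 : ∫ p : ℝ × ℝ, f p.2 * g p.2 ∂(μ.prod μ) = ∫ x, f x * g x ∂μ := by
    have := integral_prod_mul (μ := μ) (ν := μ) (fun _ => (1:ℝ)) (fun x => f x * g x)
    simpa using this
  have e3 : ∫ p : ℝ × ℝ, f p.1 * g p.2 ∂(μ.prod μ) = (∫ x, f x ∂μ) * ∫ x, g x ∂μ :=
    integral_prod_mul f g
  have e4 : ∫ p : ℝ × ℝ, f p.2 * g p.1 ∂(μ.prod μ) = (∫ x, f x ∂μ) * ∫ x, g x ∂μ := by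
    have := integral_prod_mul (μ := μ) (ν := μ) g f
    simpa [mul_comm] using this
  rw [expand, e1, e2, e3, e4] at key
  linarith


lemma integral_x_mul_exp_neg_mul_sq {a : ℝ} (ha : 0 < a) :
    ∫ x : ℝ, x * Real.exp (-a * x^2) = 0 := by
  have h := MeasureTheory.integral_neg_eq_self (fun x : ℝ => x * Real.exp (-a * x^2)) volume
  have h2 : ∫ x : ℝ, (-x) * Real.exp (-a * (-x)^2)
      = - ∫ x : ℝ, x * Real.exp (-a * x^2) := by
    rw [← integral_neg]
    congr 1 with x
    ring_nf
  rw [h2] at h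
  linarith

lemma integrable_sq_mul_exp_neg_mul_sq {a : ℝ} (ha : 0 < a) :
    Integrable (fun x : ℝ => x^2 * Real.exp (-a * x^2)) := by
  have h := integrable_rpow_mul_exp_neg_mul_sq ha (by norm_num : (-1:ℝ) < 2)
  have e : ∀ x : ℝ, x ^ (2:ℝ) = x ^ (2:ℕ) := fun x => by
    rw [← Real.rpow_natCast x 2]; norm_num
  simpa [e] using h

lemma integral_sq_mul_exp_neg_mul_sq {a : ℝ} (ha : 0 < a) :
    ∫ x : ℝ, x^2 * Real.exp (-a * x^2) = Real.sqrt (π / a) / (2 * a) := by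
  have hu : ∀ x : ℝ, HasDerivAt (fun y : ℝ => y) 1 x := fun x => hasDerivAt_id x
  have hv : ∀ x : ℝ, HasDerivAt (fun y : ℝ => Real.exp (-a * y^2))
      (Real.exp (-a * x^2) * (-a * (2 * x^1))) x := by
    intro x
    exact (((hasDerivAt_pow 2 x).const_mul (-a)).exp)
  have huv' : Integrable ((fun y : ℝ => y) * fun x => Real.exp (-a * x^2) * (-a * (2 * x^1))) := by
    have : ((fun y : ℝ => y) * fun x => Real.exp (-a * x^2) * (-a * (2 * x^1)))
        = fun x : ℝ => (-2*a) * (x^2 * Real.exp (-a * x^2)) := by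
      funext x; simp [Pi.mul_apply]; ring
    rw [this]
    exact (integrable_sq_mul_exp_neg_mul_sq ha).const_mul _
  have hu'v : Integrable ((fun _ : ℝ => (1:ℝ)) * fun x => Real.exp (-a * x^2)) := by
    have h0 := integrable_exp_neg_mul_sq ha
    have e : ((fun _ : ℝ => (1:ℝ)) * fun x => Real.exp (-a * x^2))
        = fun x : ℝ => Real.exp (-a * x^2) := by funext x; simp
    rw [e]; exact h0
  have huv : Integrable ((fun y : ℝ => y) * fun x => Real.exp (-a * x^2)) := by
    have h0 := integrable_mul_exp_neg_mul_sq ha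
    have e : ((fun y : ℝ => y) * fun x => Real.exp (-a * x^2))
        = fun x : ℝ => x * Real.exp (-a * x^2) := by funext x; simp
    rw [e]; exact h0
  have key := MeasureTheory.integral_mul_deriv_eq_deriv_mul_of_integrable (fun x _ => hu x) (fun x _ => hv x) huv' hu'v huv
  have hL : ∫ x : ℝ, x * (Real.exp (-a * x^2) * (-a * (2 * x^1)))
      = (-2*a) * ∫ x : ℝ, x^2 * Real.exp (-a * x^2) := by
    have e : (fun x : ℝ => x * (Real.exp (-a * x^2) * (-a * (2 * x^1))))
        = fun x : ℝ => (-2*a) • (x^2 * Real.exp (-a * x^2)) := by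
      funext x; simp only [smul_eq_mul]; ring
    rw [e, integral_smul, smul_eq_mul]
  have hR : - ∫ x : ℝ, (1:ℝ) * Real.exp (-a * x^2) = - Real.sqrt (π / a) := by
    have e : (fun x : ℝ => (1:ℝ) * Real.exp (-a * x^2))
        = fun x : ℝ => Real.exp (-a * x^2) := by funext x; rw [one_mul]
    rw [e, integral_gaussian]
  rw [hL, hR] at key
  have h2a : (2*a) ≠ 0 := by positivity
  field_simp at key ⊢
  linarith

lemma integral_gaussianReal_rep {b σ : ℝ} (hσ : 0 < σ) (g : ℝ → ℝ) :
    ∫ y, g y ∂(gaussianReal b ⟨σ^2, sq_nonneg σ⟩)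
      = ∫ x, gaussianPDFReal b ⟨σ^2, sq_nonneg σ⟩ x * g x := by
  have hv : (⟨σ^2, sq_nonneg σ⟩ : NNReal) ≠ 0 := by
    intro h
    have := congrArg (fun x : NNReal => (x:ℝ)) h
    change σ^2 = 0 at this
    nlinarith
  rw [gaussianReal_of_var_ne_zero _ hv]
  have hmeas : Measurable (fun x => (gaussianPDFReal b ⟨σ^2, sq_nonneg σ⟩ x).toNNReal) :=
    (measurable_gaussianPDFReal _ _).real_toNNReal
  have hd : (gaussianPDF b ⟨σ^2, sq_nonneg σ⟩)
      = fun x => ((gaussianPDFReal b ⟨σ^2, sq_nonneg σ⟩ x).toNNReal : ENNReal) := rfl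
  rw [hd, integral_withDensity_eq_integral_smul hmeas]
  congr 1 with x
  rw [NNReal.smul_def, smul_eq_mul, Real.coe_toNNReal _ (gaussianPDFReal_nonneg b ⟨σ^2, sq_nonneg σ⟩ x)]

lemma integrable_gaussianReal_iff {b σ : ℝ} (hσ : 0 < σ) (g : ℝ → ℝ) :
    Integrable g (gaussianReal b ⟨σ^2, sq_nonneg σ⟩)
      ↔ Integrable (fun x => gaussianPDFReal b ⟨σ^2, sq_nonneg σ⟩ x * g x) volume := by
  have hv : (⟨σ^2, sq_nonneg σ⟩ : NNReal) ≠ 0 := by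
    intro h
    have := congrArg (fun x : NNReal => (x:ℝ)) h
    change σ^2 = 0 at this
    nlinarith
  rw [gaussianReal_of_var_ne_zero _ hv]
  have hmeas : Measurable (fun x => (gaussianPDFReal b ⟨σ^2, sq_nonneg σ⟩ x).toNNReal) :=
    (measurable_gaussianPDFReal _ _).real_toNNReal
  have hd : (gaussianPDF b ⟨σ^2, sq_nonneg σ⟩)
      = fun x => ((gaussianPDFReal b ⟨σ^2, sq_nonneg σ⟩ x).toNNReal : ENNReal) := rfl
  rw [hd, integrable_withDensity_iff_integrable_smul hmeas]
  constructor <;> intro h <;> refine h.congr (Filter.Eventually.of_forall fun x => ?_) <;>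
    simp only [NNReal.smul_def, smul_eq_mul,
      Real.coe_toNNReal _ (gaussianPDFReal_nonneg b ⟨σ^2, sq_nonneg σ⟩ x)]

lemma gaussianPDFReal_eq {b σ : ℝ} (hσ : 0 < σ) (x : ℝ) :
    gaussianPDFReal b ⟨σ^2, sq_nonneg σ⟩ x
      = (Real.sqrt (2 * π * σ^2))⁻¹ * Real.exp (-(2*σ^2)⁻¹ * (x - b)^2) := by
  have hc : ((⟨σ^2, sq_nonneg σ⟩ : NNReal) : ℝ) = σ^2 := rfl
  have harg : -(x - b)^2/(2*σ^2) = -(2*σ^2)⁻¹ * (x - b)^2 := by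
    rw [div_eq_mul_inv]; ring
  unfold gaussianPDFReal
  change (Real.sqrt (2 * π * σ^2))⁻¹ * Real.exp (-(x - b)^2/(2*σ^2)) = _
  rw [harg]

lemma integrable_gauss_kernel {a : ℝ} (ha : 0 < a) (p q r : ℝ) :
    Integrable (fun x : ℝ => (p * x^2 + q * x + r) * Real.exp (-a * x^2)) := by
  have h1 := (integrable_sq_mul_exp_neg_mul_sq ha).const_mul p
  have h2 := (integrable_mul_exp_neg_mul_sq ha).const_mul q
  have h3 := (integrable_exp_neg_mul_sq ha).const_mul r
  have := (h1.add h2).add h3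
  refine this.congr (Filter.Eventually.of_forall fun x => ?_)
  simp only [Pi.add_apply]
  ring

lemma norm_sqrt_pi_div {σ : ℝ} (hσ : 0 < σ) :
    (Real.sqrt (2 * π * σ^2))⁻¹ * Real.sqrt (π / (2*σ^2)⁻¹) = 1 := by
  have h1 : π / (2*σ^2)⁻¹ = 2 * π * σ^2 := by
    rw [div_eq_mul_inv, inv_inv]; ring
  rw [h1]
  have h2 : (0:ℝ) < 2 * π * σ^2 := by positivity
  rw [inv_mul_cancel₀ (Real.sqrt_ne_zero'.mpr h2)]

lemma integral_id_gaussianReal' {b σ : ℝ} (hσ : 0 < σ) :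
    ∫ y, y ∂(gaussianReal b ⟨σ^2, sq_nonneg σ⟩) = b := by
  set a : ℝ := (2*σ^2)⁻¹ with ha_def
  have ha : 0 < a := by positivity
  set C : ℝ := (Real.sqrt (2 * π * σ^2))⁻¹ with hC_def
  rw [integral_gaussianReal_rep hσ]
  have e1 : (fun x => gaussianPDFReal b ⟨σ^2, sq_nonneg σ⟩ x * x)
      = fun x => C * Real.exp (-a * (x - b)^2) * x := by
    funext x; rw [gaussianPDFReal_eq hσ]
  rw [e1]
  have ht := MeasureTheory.integral_add_right_eq_self (μ := volume)
    (fun x : ℝ => C * Real.exp (-a * (x - b)^2) * x) b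
  rw [← ht]
  have e2 : (fun x : ℝ => C * Real.exp (-a * (x + b - b)^2) * (x + b))
      = fun x : ℝ => C * (x * Real.exp (-a * x^2)) + (C * b) * Real.exp (-a * x^2) := by
    funext x; simp only [add_sub_cancel_right]; ring
  rw [e2, integral_add (((integrable_mul_exp_neg_mul_sq ha).const_mul C))
      ((integrable_exp_neg_mul_sq ha).const_mul (C*b)), integral_const_mul, integral_const_mul,
    integral_x_mul_exp_neg_mul_sq ha, integral_gaussian, mul_zero]
  rw [zero_add, mul_comm C b, mul_assoc]
  rw [show Real.sqrt (π / a) = Real.sqrt (π / (2*σ^2)⁻¹) from rfl]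
  rw [norm_sqrt_pi_div hσ, mul_one]

lemma integral_sub_sq_gaussianReal {b σ : ℝ} (hσ : 0 < σ) :
    ∫ y, (y - b)^2 ∂(gaussianReal b ⟨σ^2, sq_nonneg σ⟩) = σ^2 := by
  set a : ℝ := (2*σ^2)⁻¹ with ha_def
  have ha : 0 < a := by positivity
  set C : ℝ := (Real.sqrt (2 * π * σ^2))⁻¹ with hC_def
  rw [integral_gaussianReal_rep hσ]
  have e1 : (fun x => gaussianPDFReal b ⟨σ^2, sq_nonneg σ⟩ x * (x - b)^2)
      = fun x => C * Real.exp (-a * (x - b)^2) * (x - b)^2 := by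
    funext x; rw [gaussianPDFReal_eq hσ]
  rw [e1]
  have ht := MeasureTheory.integral_add_right_eq_self (μ := volume)
    (fun x : ℝ => C * Real.exp (-a * (x - b)^2) * (x - b)^2) b
  rw [← ht]
  have e2 : (fun x : ℝ => C * Real.exp (-a * (x + b - b)^2) * (x + b - b)^2)
      = fun x : ℝ => C * (x^2 * Real.exp (-a * x^2)) := by
    funext x; simp only [add_sub_cancel_right]; ring
  rw [e2, integral_const_mul, integral_sq_mul_exp_neg_mul_sq ha]
  have : C * (Real.sqrt (π / a) / (2 * a)) = (C * Real.sqrt (π / a)) * (1 / (2*a)) := by ring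
  rw [this]
  rw [show Real.sqrt (π / a) = Real.sqrt (π / (2*σ^2)⁻¹) from rfl]
  rw [norm_sqrt_pi_div hσ, one_mul, ha_def]
  have hσ' : σ ≠ 0 := ne_of_gt hσ
  field_simp

lemma integrable_id_gaussianReal' {b σ : ℝ} (hσ : 0 < σ) :
    Integrable (fun y : ℝ => y) (gaussianReal b ⟨σ^2, sq_nonneg σ⟩) := by
  set a : ℝ := (2*σ^2)⁻¹ with ha_def
  have ha : 0 < a := by positivity
  set C : ℝ := (Real.sqrt (2 * π * σ^2))⁻¹ with hC_def
  rw [integrable_gaussianReal_iff hσ]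
  have h := (integrable_gauss_kernel ha 0 C (C*b)).comp_sub_right b
  refine h.congr (Filter.Eventually.of_forall fun x => ?_)
  simp only [gaussianPDFReal_eq hσ]
  ring

lemma integrable_sq_gaussianReal' {b σ : ℝ} (hσ : 0 < σ) :
    Integrable (fun y : ℝ => y^2) (gaussianReal b ⟨σ^2, sq_nonneg σ⟩) := by
  set a : ℝ := (2*σ^2)⁻¹ with ha_def
  have ha : 0 < a := by positivity
  set C : ℝ := (Real.sqrt (2 * π * σ^2))⁻¹ with hC_def
  rw [integrable_gaussianReal_iff hσ]
  have h := (integrable_gauss_kernel ha C (2*b*C) (b^2*C)).comp_sub_right b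
  refine h.congr (Filter.Eventually.of_forall fun x => ?_)
  simp only [gaussianPDFReal_eq hσ]
  ring



lemma pi_map_eval {n : ℕ} (μ : Fin n → Measure ℝ) [∀ i, IsProbabilityMeasure (μ i)]
    (i : Fin n) : (Measure.pi μ).map (Function.eval i) = μ i := by
  ext s hs
  rw [Measure.map_apply (measurable_pi_apply i) hs]
  have hpre : Function.eval i ⁻¹' s
      = Set.pi Set.univ (Function.update (fun _ : Fin n => (Set.univ : Set ℝ)) i s) := by
    ext y
    simp only [Set.mem_preimage, Set.mem_pi, Set.mem_univ, forall_true_left]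
    constructor
    · intro hy j
      rcases eq_or_ne j i with rfl | hj
      · rwa [Function.update_self]
      · rw [Function.update_of_ne hj]; trivial
    · intro hy
      have := hy i
      rwa [Function.update_self] at this
  rw [hpre, Measure.pi_pi]
  rw [Finset.prod_eq_single i]
  · rw [Function.update_self]
  · intro j _ hj
    rw [Function.update_of_ne hj]
    exact measure_univ
  · intro h; exact absurd (Finset.mem_univ i) h

lemma integral_eval_pi {n : ℕ} (μ : Fin n → Measure ℝ) [∀ i, IsProbabilityMeasure (μ i)]
    (i : Fin n) {g : ℝ → ℝ} (hg : Measurable g) :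
    ∫ y, g (y i) ∂(Measure.pi μ) = ∫ x, g x ∂(μ i) := by
  rw [← pi_map_eval μ i, integral_map (measurable_pi_apply i).aemeasurable
    (hg.aestronglyMeasurable.mono_measure le_rfl)]

end Aux

lemma coord_bound {σ lam : ℝ} (hσ : 0 < σ) (hlam : 0 ≤ lam) (b : ℝ) :
    ∫ y, min (y^2) (lam^2) ∂(gaussianReal b ⟨σ^2, sq_nonneg σ⟩)
      ≤ σ^2 + softRisk σ lam b := by
  set ν := gaussianReal b ⟨σ^2, sq_nonneg σ⟩ with hν
  haveI : IsProbabilityMeasure ν := by rw [hν]; exact instIsProbabilityMeasureGaussianReal _ _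
  have hSmono := softThresh_monotone hlam
  have hSmeas : Measurable (fun y => softThresh y lam) := hSmono.measurable
  have hId : Integrable (fun y : ℝ => y) ν := integrable_id_gaussianReal' hσ
  have hSq : Integrable (fun y : ℝ => y^2) ν := integrable_sq_gaussianReal' hσ
  have hSsq_le : ∀ y : ℝ, (softThresh y lam)^2 ≤ y^2 := fun y => by
    have h := abs_softThresh_le hlam y
    nlinarith [abs_nonneg (softThresh y lam), sq_abs (softThresh y lam), sq_abs y]
  have hmaj : Integrable (fun y : ℝ => 2 * y^2 + 2 * b^2) ν :=
    (hSq.const_mul 2).add (integrable_const (2*b^2))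
  have hf : Integrable (fun y : ℝ => y - b) ν := hId.sub (integrable_const b)
  have hSint : Integrable (fun y => softThresh y lam) ν := by
    refine (hId.abs).mono' hSmeas.aestronglyMeasurable ?_
    exact Filter.Eventually.of_forall fun y => by
      simpa [Real.norm_eq_abs] using abs_softThresh_le hlam y
  have hg : Integrable (fun y : ℝ => softThresh y lam - b) ν :=
    hSint.sub (integrable_const b)
  have hf2 : Integrable (fun y : ℝ => (y - b)^2) ν := by
    refine hmaj.mono' (((measurable_id.sub measurable_const).pow measurable_const
      ).aestronglyMeasurable) ?_
    exact Filter.Eventually.of_forall fun y => by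
      rw [Real.norm_eq_abs, abs_of_nonneg (sq_nonneg _)]; nlinarith [sq_nonneg (y + b)]
  have hg2 : Integrable (fun y : ℝ => (softThresh y lam - b)^2) ν := by
    refine hmaj.mono' (((hSmeas.sub measurable_const).pow measurable_const
      ).aestronglyMeasurable) ?_
    exact Filter.Eventually.of_forall fun y => by
      rw [Real.norm_eq_abs, abs_of_nonneg (sq_nonneg _)]
      nlinarith [hSsq_le y, sq_nonneg (softThresh y lam + b), sq_nonneg (softThresh y lam - y)]
  have hfg : Integrable (fun y : ℝ => (y - b) * (softThresh y lam - b)) ν := by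
    refine hmaj.mono' (((measurable_id.sub measurable_const).mul
      (hSmeas.sub measurable_const)).aestronglyMeasurable) ?_
    refine Filter.Eventually.of_forall fun y => ?_
    rw [Real.norm_eq_abs, abs_mul]
    have h1 : |y - b| ≤ |y| + |b| := (abs_add_le y (-b)).trans_eq (by rw [abs_neg]) |>.trans_eq' (by rw [sub_eq_add_neg])
    have h2 : |softThresh y lam - b| ≤ |y| + |b| := by
      have := (abs_add_le (softThresh y lam) (-b)).trans_eq (by rw [abs_neg])
      rw [← sub_eq_add_neg] at this
      exact this.trans (by linarith [abs_softThresh_le hlam y])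
    have h3 : |y - b| * |softThresh y lam - b| ≤ (|y| + |b|) * (|y| + |b|) :=
      mul_le_mul h1 h2 (abs_nonneg _) (by positivity)
    refine h3.trans ?_
    nlinarith [sq_abs y, sq_abs b, sq_nonneg (|y| - |b|)]
  have hfmono : Monotone (fun y : ℝ => y - b) := fun x y h => sub_le_sub_right h b
  have hgmono : Monotone (fun y : ℝ => softThresh y lam - b) :=
    fun x y h => sub_le_sub_right (hSmono h) b
  have hcov := mul_integral_le_integral_mul hfmono hgmono hf hg hfg
  have hmean : ∫ y, (y - b) ∂ν = 0 := by
    rw [integral_sub hId (integrable_const b), integral_const, integral_id_gaussianReal' hσ]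
    simp
  rw [hmean, zero_mul] at hcov
  have hrw : (fun y : ℝ => min (y^2) (lam^2))
      = fun y : ℝ => (y - b)^2 - 2 * ((y - b) * (softThresh y lam - b))
          + (softThresh y lam - b)^2 := by
    funext y; rw [min_sq_eq_sub_softThresh hlam]; ring
  have ha1 : Integrable (fun y : ℝ => (y - b)^2
      - 2 * ((y - b) * (softThresh y lam - b))) ν := hf2.sub (hfg.const_mul 2)
  rw [hrw, integral_add ha1 hg2,
    integral_sub hf2 (hfg.const_mul 2), integral_const_mul,
    integral_sub_sq_gaussianReal hσ]
  have hRisk : softRisk σ lam b = ∫ y, (softThresh y lam - b)^2 ∂ν := rfl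
  rw [hRisk]
  linarith

/-- Under the orthogonal sparsity model, for any deterministic threshold `λₙ`, the
upward bias of `σ̃²ₙ = (1/n) Σᵢ min{Yᵢ², λₙ²}` is bounded by the weighted risks:
`E[σ̃²ₙ] − σ² ≤ (⌈n^α⌉/n) r_S(λₙ, β) + ((n − ⌈n^α⌉)/n) r_S(λₙ, 0)`. -/
theorem upward_bias_le_weighted_softRisk
    (β σ α : ℝ) (hσ : 0 < σ) (hα0 : 0 ≤ α) (hα1 : α < 1)
    (n : ℕ) (hn : 0 < n) (lam : ℝ) (hlam : 0 ≤ lam) :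
    (∫ y, (1 / (n : ℝ)) * ∑ i : Fin n, min ((y i)^2) (lam^2)
        ∂(orthoModel β σ α n)) - σ^2
      ≤ ((⌈(n : ℝ)^α⌉₊ : ℝ) / n) * softRisk σ lam β
        + (((n : ℝ) - (⌈(n : ℝ)^α⌉₊ : ℝ)) / n) * softRisk σ lam 0 := by
  set m : ℕ := ⌈(n : ℝ)^α⌉₊ with hm
  set μi : Fin n → Measure ℝ := fun i =>
    gaussianReal (if (i : ℕ) < m then β else 0) ⟨σ^2, sq_nonneg σ⟩ with hμi
  have hmodel : orthoModel β σ α n = Measure.pi μi := rfl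
  haveI : ∀ i, IsProbabilityMeasure (μi i) := fun i => instIsProbabilityMeasureGaussianReal _ _
  haveI : IsProbabilityMeasure (Measure.pi μi) := by infer_instance
  have hmn : m ≤ n := by
    rw [hm]
    refine Nat.ceil_le.mpr ?_
    have h1n : (1:ℝ) ≤ n := by exact_mod_cast hn
    calc (n:ℝ)^α ≤ (n:ℝ)^(1:ℝ) := Real.rpow_le_rpow_of_exponent_le h1n hα1.le
      _ = n := Real.rpow_one _
  have hnne : (n:ℝ) ≠ 0 := by positivity
  have hgmeas : Measurable (fun x : ℝ => min (x^2) (lam^2)) :=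
    (measurable_id.pow measurable_const).min measurable_const
  have hint : ∀ i : Fin n, Integrable (fun y : Fin n → ℝ => min ((y i)^2) (lam^2))
      (Measure.pi μi) := by
    intro i
    refine (integrable_const (lam^2)).mono'
      (((measurable_pi_apply i).pow measurable_const).min
        measurable_const).aestronglyMeasurable ?_
    refine Filter.Eventually.of_forall fun y => ?_
    rw [Real.norm_eq_abs, abs_of_nonneg (le_min (sq_nonneg _) (sq_nonneg _))]
    exact min_le_right _ _
  have hsplit : ∫ y, (1 / (n : ℝ)) * ∑ i : Fin n, min ((y i)^2) (lam^2)
      ∂(orthoModel β σ α n)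
      = (1 / (n : ℝ)) * ∑ i : Fin n, ∫ x, min (x^2) (lam^2) ∂(μi i) := by
    rw [hmodel, integral_const_mul, integral_finset_sum Finset.univ (fun i _ => hint i)]
    congr 1
    exact Finset.sum_congr rfl fun i _ => integral_eval_pi μi i hgmeas
  have hbound : ∀ i : Fin n, ∫ x, min (x^2) (lam^2) ∂(μi i)
      ≤ σ^2 + softRisk σ lam (if (i : ℕ) < m then β else 0) :=
    fun i => coord_bound hσ hlam _
  have hsum : ∑ i : Fin n, (σ^2 + softRisk σ lam (if (i : ℕ) < m then β else 0))
      = n * σ^2 + m * softRisk σ lam β + ((n : ℝ) - m) * softRisk σ lam 0 := by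
    rw [Finset.sum_add_distrib, Finset.sum_const, Finset.card_univ, Fintype.card_fin,
      nsmul_eq_mul]
    have e1 : ∑ i : Fin n, softRisk σ lam (if (i : ℕ) < m then β else 0)
        = ∑ k ∈ Finset.range n, (if k < m then softRisk σ lam β else softRisk σ lam 0) := by
      rw [Finset.sum_range fun k => if k < m then softRisk σ lam β else softRisk σ lam 0]
      exact Finset.sum_congr rfl fun i _ => by split <;> rfl
    rw [e1, Finset.sum_ite, Finset.sum_const, Finset.sum_const]
    have e2 : Finset.filter (fun k => k < m) (Finset.range n) = Finset.range m :=
      Finset.ext fun k => by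
        simp only [Finset.mem_filter, Finset.mem_range]
        omega
    have e3 : (Finset.filter (fun k => ¬ k < m) (Finset.range n)).card = n - m := by
      have h := Finset.card_filter_add_card_filter_not
        (s := Finset.range n) (p := fun k => k < m)
      have h2 : Finset.filter (fun a => ¬ (fun k => k < m) a) (Finset.range n)
          = Finset.filter (fun k => ¬ k < m) (Finset.range n) := rfl
      rw [h2, e2, Finset.card_range, Finset.card_range] at h
      omega
    rw [e2, e3, Finset.card_range, nsmul_eq_mul, nsmul_eq_mul, Nat.cast_sub hmn]
    ring
  have hstep : ∫ y, (1 / (n : ℝ)) * ∑ i : Fin n, min ((y i)^2) (lam^2)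
      ∂(orthoModel β σ α n)
      ≤ (1 / (n : ℝ)) * (n * σ^2 + m * softRisk σ lam β + ((n : ℝ) - m) * softRisk σ lam 0) := by
    rw [hsplit, ← hsum]
    refine mul_le_mul_of_nonneg_left ?_ (by positivity)
    exact Finset.sum_le_sum fun i _ => hbound i
  have hfinal : (1 / (n : ℝ)) * (n * σ^2 + m * softRisk σ lam β
        + ((n : ℝ) - m) * softRisk σ lam 0) - σ^2
      = ((m : ℝ) / n) * softRisk σ lam β + (((n : ℝ) - m) / n) * softRisk σ lam 0 := by
    field_simp
    ring
  linarith
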